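/- Let C be the triangle in ℚ³ given as the convex hull of e₂, e₃ and −e₂−e₃ (all lying in the plane {x₁ = 0}), and let x ∈ ℤ³ be a lattice point with first coordinate x₁ ≥ 2. If the only lattice points of the convex hull conv(C, x) are its four vertices e₂, e₃, −e₂−e₃, x and the origin, then x₁ = 3. -/

import Mathlib

set_option linter.unreachableTactic false
set_option linter.unusedTactic false

private lemma shadow_key (x : Fin 3 → ℤ) (hx : 2 ≤ x 0)
    (h : ∀ p ∈ convexHull ℚ
        ({![0, 1, 0], ![0, 0, 1], ![0, -1, -1], fun i => (x i : ℚ)} :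
          Set (Fin 3 → ℚ)),
      (∀ i, ∃ z : ℤ, p i = (z : ℚ)) →
      p ∈ ({![0, 1, 0], ![0, 0, 1], ![0, -1, -1], fun i => (x i : ℚ), 0} :
          Set (Fin 3 → ℚ)))
    (m a b w1 w2 : ℤ) (hm1 : 1 ≤ m) (hm2 : m ≤ x 0 - 1)
    (h1 : a + b ≤ m) (h2 : -2*a + b ≤ m) (h3 : a - 2*b ≤ m)
    (e1 : (x 0 - m) * x 1 + a = x 0 * w1)
    (e2 : (x 0 - m) * x 2 + b = x 0 * w2) : False := by
  set n := x 0 with hn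
  have hnQ : (0:ℚ) < (n:ℚ) := by exact_mod_cast (by omega : (0:ℤ) < n)
  have hmQ : (m:ℚ) ≤ (n:ℚ) - 1 := by exact_mod_cast hm2
  have h1Q : (a:ℚ) + b ≤ (m:ℚ) := by exact_mod_cast h1
  have h2Q : -2*(a:ℚ) + b ≤ (m:ℚ) := by exact_mod_cast h2
  have h3Q : (a:ℚ) - 2*b ≤ (m:ℚ) := by exact_mod_cast h3
  have e1Q : ((n:ℚ) - m) * (x 1 : ℚ) + a = (n:ℚ) * w1 := by exact_mod_cast e1
  have e2Q : ((n:ℚ) - m) * (x 2 : ℚ) + b = (n:ℚ) * w2 := by exact_mod_cast e2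
  set S : Set (Fin 3 → ℚ) :=
    ({![0, 1, 0], ![0, 0, 1], ![0, -1, -1], fun i => (x i : ℚ)} : Set (Fin 3 → ℚ)) with hS
  set p : Fin 3 → ℚ := fun i => ((![n - m, w1, w2] : Fin 3 → ℤ) i : ℚ) with hp
  set w : Fin 4 → ℚ := ![((m:ℚ) + 2*a - b)/(3*n), ((m:ℚ) - a + 2*b)/(3*n),
      ((m:ℚ) - a - b)/(3*n), ((n:ℚ) - m)/n] with hw
  set z : Fin 4 → (Fin 3 → ℚ) := ![![0,1,0], ![0,0,1], ![0,-1,-1], fun i => (x i : ℚ)] with hz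
  have hmem : p ∈ convexHull ℚ S := by
    have hwnn : ∀ i ∈ Finset.univ, (0:ℚ) ≤ w i := by
      intro i _
      fin_cases i <;> simp only [hw, Matrix.cons_val_zero, Matrix.cons_val_one,
        Matrix.head_cons, Matrix.cons_val_two, Matrix.tail_cons, Matrix.cons_val_three] <;>
        apply div_nonneg <;> linarith
    have hwsum : ∑ i : Fin 4, w i = 1 := by
      simp only [hw, Fin.sum_univ_four, Matrix.cons_val_zero, Matrix.cons_val_one,
        Matrix.head_cons, Matrix.cons_val_two, Matrix.tail_cons, Matrix.cons_val_three]
      field_simp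
      ring
    have hzs : ∀ i ∈ Finset.univ, z i ∈ convexHull ℚ S := by
      intro i _
      apply subset_convexHull
      fin_cases i <;> simp [hz, hS]
    have hin := (convex_convexHull ℚ S).sum_mem hwnn hwsum hzs
    have hpe : p = ∑ i : Fin 4, w i • z i := by
      funext j
      have : (∑ i : Fin 4, w i • z i) j = ∑ i : Fin 4, w i * z i j := by
        simp [Finset.sum_apply]
      rw [this]
      fin_cases j <;>
        simp only [hp, hw, hz, Fin.sum_univ_four, Matrix.cons_val_zero, Matrix.cons_val_one,
          Matrix.head_cons, Matrix.cons_val_two, Matrix.tail_cons, Matrix.cons_val_three,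
          Fin.isValue, Int.cast_sub, Int.cast_mul]
      · push_cast
        field_simp
        rw [← hn]; ring
      · push_cast
        field_simp
        first
        | linear_combination (3*(n:ℚ)) * e1Q
        | linear_combination (-3*(n:ℚ)) * e1Q
        | linear_combination (6*(n:ℚ)) * e1Q
        | linear_combination (-6*(n:ℚ)) * e1Q
        | linear_combination (-3:ℚ) * e1Q
      · push_cast
        field_simp
        first
        | linear_combination (3*(n:ℚ)) * e2Q
        | linear_combination (-3*(n:ℚ)) * e2Q
        | linear_combination (6*(n:ℚ)) * e2Q
        | linear_combination (-6*(n:ℚ)) * e2Q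
        | linear_combination (-3:ℚ) * e2Q
    rw [hpe]; exact hin
  have hint : ∀ i, ∃ zz : ℤ, p i = (zz : ℚ) := fun i => ⟨![n - m, w1, w2] i, rfl⟩
  have h5 := h p hmem hint
  simp only [Set.mem_insert_iff, Set.mem_singleton_iff] at h5
  have hp0 : p 0 = ((n - m : ℤ) : ℚ) := rfl
  rcases h5 with h5 | h5 | h5 | h5 | h5 <;>
    (have hc := congrFun h5 0; rw [hp0] at hc)
  · have : ((n - m : ℤ) : ℚ) = 0 := by simpa using hc
    have : n - m = 0 := by exact_mod_cast this
    omega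
  · have : ((n - m : ℤ) : ℚ) = 0 := by simpa using hc
    have : n - m = 0 := by exact_mod_cast this
    omega
  · have : ((n - m : ℤ) : ℚ) = 0 := by simpa using hc
    have : n - m = 0 := by exact_mod_cast this
    omega
  · have : ((n - m : ℤ) : ℚ) = ((x 0 : ℤ) : ℚ) := by simpa using hc
    have : n - m = x 0 := by exact_mod_cast this
    omega
  · have : ((n - m : ℤ) : ℚ) = 0 := by simpa using hc
    have : n - m = 0 := by exact_mod_cast this
    omega

/-- Let `C = conv(e₂, e₃, -e₂-e₃)` in `ℚ³` and `x ∈ ℤ³` with `x₁ ≥ 2`.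
If the only lattice points of `conv(C, x)` are its four vertices and the
origin, then `x₁ = 3`. -/
theorem shadow_lemma (x : Fin 3 → ℤ) (hx : 2 ≤ x 0)
    (h : ∀ p ∈ convexHull ℚ
        ({![0, 1, 0], ![0, 0, 1], ![0, -1, -1], fun i => (x i : ℚ)} :
          Set (Fin 3 → ℚ)),
      (∀ i, ∃ z : ℤ, p i = (z : ℚ)) →
      p ∈ ({![0, 1, 0], ![0, 0, 1], ![0, -1, -1], fun i => (x i : ℚ), 0} :
          Set (Fin 3 → ℚ))) :
    x 0 = 3 := by
  set n := x 0 with hn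
  set y1 := x 1 with hy1
  set y2 := x 2 with hy2
  set L1 : ℤ := y1 + y2 with hL1
  set L2 : ℤ := -2*y1 + y2 with hL2
  set L3 : ℤ := y1 - 2*y2 with hL3
  have hLsum : L1 + L2 + L3 = 0 := by simp [hL1, hL2, hL3]; ring
  -- Reformulated "no lattice point in the open slices" condition
  have NoP : ∀ m p1 p2 p3 : ℤ, 1 ≤ m → m ≤ n - 1 → p1 + p2 + p3 = 0 →
      (3 ∣ p1 - p2) → (3 ∣ p1 - p3) →
      m*L1 - n*p1 ≤ m → m*L2 - n*p2 ≤ m → m*L3 - n*p3 ≤ m → False := by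
    intro m p1 p2 p3 hm1 hm2 hsum hd12 hd13 hf1 hf2 hf3
    obtain ⟨z1, hz1⟩ := hd12
    obtain ⟨z2, hz2⟩ := hd13
    have ez1 : z1 + z2 = p1 := by omega
    have ez2 : -2*z1 + z2 = p2 := by omega
    have ez3 : z1 - 2*z2 = p3 := by omega
    apply shadow_key x hx h m (m*y1 - n*z1) (m*y2 - n*z2) (y1 - z1) (y2 - z2) hm1 hm2
    · have : (m*y1 - n*z1) + (m*y2 - n*z2) = m*L1 - n*p1 := by
        rw [← ez1]; simp [hL1]; ring
      omega
    · have : -2*(m*y1 - n*z1) + (m*y2 - n*z2) = m*L2 - n*p2 := by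
        rw [← ez2]; simp [hL2]; ring
      omega
    · have : (m*y1 - n*z1) - 2*(m*y2 - n*z2) = m*L3 - n*p3 := by
        rw [← ez3]; simp [hL3]; ring
      omega
    · ring
    · ring
  -- floor division data for the slice m = n - 1
  set q1 : ℤ := ((n-1)*L1) / n with hq1
  set q2 : ℤ := ((n-1)*L2) / n with hq2
  set q3 : ℤ := ((n-1)*L3) / n with hq3
  set r1 : ℤ := ((n-1)*L1) % n with hr1
  set r2 : ℤ := ((n-1)*L2) % n with hr2
  set r3 : ℤ := ((n-1)*L3) % n with hr3
  have hnne : n ≠ 0 := by omega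
  have hd1 : n * q1 + r1 = (n-1)*L1 := Int.mul_ediv_add_emod _ _
  have hd2 : n * q2 + r2 = (n-1)*L2 := Int.mul_ediv_add_emod _ _
  have hd3 : n * q3 + r3 = (n-1)*L3 := Int.mul_ediv_add_emod _ _
  have hr1n : 0 ≤ r1 := Int.emod_nonneg _ hnne
  have hr2n : 0 ≤ r2 := Int.emod_nonneg _ hnne
  have hr3n : 0 ≤ r3 := Int.emod_nonneg _ hnne
  have hr1l : r1 < n := Int.emod_lt_of_pos _ (by omega)
  have hr2l : r2 < n := Int.emod_lt_of_pos _ (by omega)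
  have hr3l : r3 < n := Int.emod_lt_of_pos _ (by omega)
  -- the counting step: for every c, the rounded-up-to-class-c sums are positive
  have step : ∀ c : ℤ,
      1 ≤ (c - 3*((c-q1)/3)) + (c - 3*((c-q2)/3)) + (c - 3*((c-q3)/3)) := by
    intro c
    set P1 : ℤ := c - 3*((c-q1)/3) with hP1
    set P2 : ℤ := c - 3*((c-q2)/3) with hP2
    set P3 : ℤ := c - 3*((c-q3)/3) with hP3
    by_contra hS
    push_neg at hS
    set Sm : ℤ := P1 + P2 + P3 with hSm
    have hS0 : Sm ≤ 0 := by omega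
    apply NoP (n-1) (P1 - Sm) P2 P3 (by omega) le_rfl (by omega) (by omega) (by omega)
    · have hge : q1 ≤ P1 - Sm := by omega
      have : n * q1 ≤ n * (P1 - Sm) := by
        apply mul_le_mul_of_nonneg_left hge (by omega)
      linarith
    · have hge : q2 ≤ P2 := by omega
      have : n * q2 ≤ n * P2 := by
        apply mul_le_mul_of_nonneg_left hge (by omega)
      linarith
    · have hge : q3 ≤ P3 := by omega
      have : n * q3 ≤ n * P3 := by
        apply mul_le_mul_of_nonneg_left hge (by omega)
      linarith
  have s0 := step 0
  have s1 := step 1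
  have s2 := step 2
  have hqsum : 0 ≤ q1 + q2 + q3 := by omega
  -- n * (q1+q2+q3) = -(r1+r2+r3) hence all remainders vanish
  have hnq : n * (q1 + q2 + q3) = -(r1 + r2 + r3) := by
    have e : n*q1 + n*q2 + n*q3 + (r1+r2+r3) = (n-1)*(L1+L2+L3) := by
      linear_combination hd1 + hd2 + hd3
    rw [hLsum] at e
    linarith
  have hrz : r1 = 0 ∧ r2 = 0 ∧ r3 = 0 := by
    have h1 : 0 ≤ n * (q1 + q2 + q3) := mul_nonneg (by omega) hqsum
    omega
  have hqz : q1 + q2 + q3 = 0 := by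
    have h1 : n * (q1 + q2 + q3) = 0 := by omega
    have := mul_eq_zero.mp h1
    omega
  -- L_i = n * t_i
  set t1 : ℤ := L1 - q1 with ht1'
  set t2 : ℤ := L2 - q2 with ht2'
  set t3 : ℤ := L3 - q3 with ht3'
  have ht1 : L1 = n * t1 := by
    have : n * q1 = (n-1)*L1 := by omega
    simp only [ht1']
    linarith [this]
  have ht2 : L2 = n * t2 := by
    have : n * q2 = (n-1)*L2 := by omega
    simp only [ht2']
    linarith [this]
  have ht3 : L3 = n * t3 := by
    have : n * q3 = (n-1)*L3 := by omega
    simp only [ht3']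
    linarith [this]
  have htsum : t1 + t2 + t3 = 0 := by omega
  -- endgame
  by_contra hne
  have : n = 2 ∨ 4 ≤ n := by omega
  rcases this with h2 | h4
  · -- n = 2 : slice m = 1 with p = t
    have e12 : 2*(t1 - t2) = 3*y1 := by
      have := ht1; have := ht2
      rw [h2] at *
      simp only [hL1, hL2] at *
      linarith
    have e13 : 2*(t1 - t3) = 3*y2 := by
      have := ht1; have := ht3
      rw [h2] at *
      simp only [hL1, hL3] at *
      linarith
    apply NoP 1 t1 t2 t3 le_rfl (by omega) htsum (by omega) (by omega)
    · linarith [ht1]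
    · linarith [ht2]
    · linarith [ht3]
  · -- n ≥ 4 : slice m = 3 with p = 3t
    apply NoP 3 (3*t1) (3*t2) (3*t3) (by omega) (by omega) (by omega)
      ⟨t1 - t2, by ring⟩ ⟨t1 - t3, by ring⟩
    · have : n * (3*t1) = 3 * (n * t1) := by ring
      rw [this, ← ht1]; omega
    · have : n * (3*t2) = 3 * (n * t2) := by ring
      rw [this, ← ht2]; omega
    · have : n * (3*t3) = 3 * (n * t3) := by ring
      rw [this, ← ht3]; omega
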